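/- Let P be a real d×d matrix with Pᵀ = P and P·P = P, let q ∈ ℝ^d satisfy P·q = q, and let m₀ ∈ ℝ^d. Then for every η > 0, (η·I + P)⁻¹·(q + η·m₀) = (1/(1+η))·q + (η/(1+η))·P·m₀ + (I − P)·m₀, and consequently (η·I + P)⁻¹·(q + η·m₀) tends to q + (I − P)·m₀ as η → 0⁺. (With P = H†·H and q = H†·y this is the key limit showing MAS recovers DDNM as η₂ = 0 and η₁ → 0.) -/

import Mathlib

open Matrix

theorem proj_shift_limit {d : ℕ} (P : Matrix (Fin d) (Fin d) ℝ)
    (hsym : Pᵀ = P) (hidem : P * P = P)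
    (q m₀ : Fin d → ℝ) (hq : P *ᵥ q = q) :
    (∀ η : ℝ, 0 < η →
      (η • (1 : Matrix (Fin d) (Fin d) ℝ) + P)⁻¹ *ᵥ (q + η • m₀) =
        (1 / (1 + η)) • q + (η / (1 + η)) • (P *ᵥ m₀) +
          ((1 : Matrix (Fin d) (Fin d) ℝ) - P) *ᵥ m₀) ∧
    Filter.Tendsto
      (fun η : ℝ => (η • (1 : Matrix (Fin d) (Fin d) ℝ) + P)⁻¹ *ᵥ (q + η • m₀))
      (nhdsWithin 0 (Set.Ioi 0))
      (nhds (q + ((1 : Matrix (Fin d) (Fin d) ℝ) - P) *ᵥ m₀)) := by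
  have key : ∀ η : ℝ, 0 < η →
      (η • (1 : Matrix (Fin d) (Fin d) ℝ) + P)⁻¹ *ᵥ (q + η • m₀) =
        (1 / (1 + η)) • q + (η / (1 + η)) • (P *ᵥ m₀) +
          ((1 : Matrix (Fin d) (Fin d) ℝ) - P) *ᵥ m₀ := by
    intro η hη
    have hη0 : η ≠ 0 := ne_of_gt hη
    have h1η : (1 + η) ≠ 0 := by positivity
    have hinv : (η • (1 : Matrix (Fin d) (Fin d) ℝ) + P)⁻¹ =
        (1 / (1 + η)) • P + (1 / η) • ((1 : Matrix (Fin d) (Fin d) ℝ) - P) := by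
      apply Matrix.inv_eq_right_inv
      have : (η • (1 : Matrix (Fin d) (Fin d) ℝ) + P) *
          ((1 / (1 + η)) • P + (1 / η) • ((1 : Matrix (Fin d) (Fin d) ℝ) - P)) =
          (η / (1 + η) + 1 / (1 + η)) • P +
            ((1 : Matrix (Fin d) (Fin d) ℝ) - P) := by
        simp only [Matrix.add_mul, Matrix.mul_add, Matrix.mul_sub, Matrix.sub_mul,
          Matrix.smul_mul, Matrix.mul_smul, Matrix.one_mul, Matrix.mul_one, hidem,
          smul_smul]
        match_scalars <;> field_simp <;> ring
      rw [this]
      have : η / (1 + η) + 1 / (1 + η) = 1 := by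
        field_simp
        ring
      rw [this, one_smul]
      abel
    rw [hinv]
    have hPq : ((1 : Matrix (Fin d) (Fin d) ℝ) - P) *ᵥ q = 0 := by
      rw [Matrix.sub_mulVec, Matrix.one_mulVec, hq, sub_self]
    simp only [Matrix.add_mulVec, Matrix.smul_mulVec, Matrix.mulVec_add,
      Matrix.mulVec_smul, hq, hPq]
    simp only [smul_zero, add_zero]
    match_scalars <;> field_simp <;> ring
  refine ⟨key, ?_⟩
  have hc : ContinuousAt (fun η : ℝ =>
      (1 / (1 + η)) • q + (η / (1 + η)) • (P *ᵥ m₀) +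
        ((1 : Matrix (Fin d) (Fin d) ℝ) - P) *ᵥ m₀) 0 := by
    have hne : (1 : ℝ) + 0 ≠ 0 := by norm_num
    exact (((continuousAt_const.div ((continuous_const.add continuous_id).continuousAt)
      hne).smul continuousAt_const).add
      ((continuousAt_id.div ((continuous_const.add continuous_id).continuousAt)
      hne).smul continuousAt_const)).add continuousAt_const
  have ht := hc.tendsto.mono_left (nhdsWithin_le_nhds (s := Set.Ioi (0:ℝ)))
  simp only [add_zero, div_one, one_smul, zero_div, zero_smul, zero_add] at ht
  refine Filter.Tendsto.congr' ?_ ht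
  filter_upwards [self_mem_nhdsWithin] with η hη
  exact (key η hη).symm
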